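/- For every string w over the integers, shape(w) is the lexicographically smallest string over the natural numbers that is order-isomorphic to w; that is, for every string u over ℕ with u ≈ w, shape(w) is lexicographically less than or equal to u. -/

import Mathlib

/-- Two strings (over possibly different linear orders) are order-isomorphic:
same length and corresponding pairs compare the same way. -/
def OrderIsomorphic {α β : Type*} [LinearOrder α] [LinearOrder β] [Inhabited α] [Inhabited β]
    (x : List α) (y : List β) : Prop :=
  x.length = y.length ∧
    ∀ i j, i < x.length → j < x.length →
      (x.getD i default ≤ x.getD j default ↔ y.getD i default ≤ y.getD j default)

/-- The code of position `i` (0-indexed): the pair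
(number of earlier positions with strictly smaller value,
 number of earlier positions with equal value). -/
def phi (w : List ℤ) (i : ℕ) : ℕ × ℕ :=
  (((Finset.range i).filter (fun k => w.getD k 0 < w.getD i 0)).card,
   ((Finset.range i).filter (fun k => w.getD k 0 = w.getD i 0)).card)

/-- The code of a string: the list of codes of all its positions. -/
def code (w : List ℤ) : List (ℕ × ℕ) :=
  (List.range w.length).map (phi w)

/-- The shape of a string: its `i`-th entry is the number of distinct values
among the entries of `w` that are strictly smaller than `w[i]`. -/
def shape (w : List ℤ) : List ℕ :=
  (List.range w.length).map (fun i => (w.toFinset.filter (fun v => v < w.getD i 0)).card)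

/-- `w` contains an op-square of length `2*k` at (0-indexed) position `i`. -/
def OpSquareAt (w : List ℤ) (i k : ℕ) : Prop :=
  i + 2 * k ≤ w.length ∧
    OrderIsomorphic ((w.drop i).take k) ((w.drop (i + k)).take k)

/-- `shape w` is the lexicographically smallest string over ℕ
that is order-isomorphic to `w`. -/
lemma lex_of_pointwise : ∀ (a b : List ℕ), a.length = b.length →
    (∀ i, i < a.length → a.getD i 0 ≤ b.getD i 0) → a = b ∨ List.Lex (· < ·) a b := by
  intro a
  induction a with
  | nil => intro b hl _; left; exact ((List.length_eq_zero_iff.mp hl.symm).symm)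
  | cons x xs ih =>
    intro b hl hp
    cases b with
    | nil => simp at hl
    | cons y ys =>
      have h0 : x ≤ y := by simpa using hp 0 (by simp)
      rcases lt_or_eq_of_le h0 with hlt | heq
      · right; exact List.Lex.rel hlt
      · rcases ih ys (by simpa using hl) (fun i hi => by
          simpa using hp (i + 1) (by simpa using hi)) with h1 | h1
        · left; rw [heq, h1]
        · right; rw [heq]; exact List.Lex.cons h1

theorem shape_lex_min (w : List ℤ) (u : List ℕ) (h : OrderIsomorphic u w) :
    shape w = u ∨ List.Lex (· < ·) (shape w) u := by
  obtain ⟨hlen, hiso⟩ := h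
  apply lex_of_pointwise
  · simp [shape, hlen]
  · intro i hi
    have hi' : i < w.length := by simpa [shape] using hi
    have hiu : i < u.length := hlen ▸ hi'
    have hs : (shape w).getD i 0
        = (w.toFinset.filter (fun v => v < w.getD i 0)).card := by
      simp [shape, List.getD_eq_getElem?_getD, hi']
    rw [hs]
    have hcard := Finset.card_le_card_of_injOn
      (f := fun v => u.getD (w.idxOf v) 0)
      (s := w.toFinset.filter (fun v => v < w.getD i 0))
      (t := Finset.range (u.getD i 0))
      ?_ ?_
    · simpa using hcard
    · intro v hv
      simp only [Finset.mem_coe, Finset.mem_filter, List.mem_toFinset] at hv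
      have hidx : w.idxOf v < w.length := List.idxOf_lt_length_iff.mpr hv.1
      have hval : w.getD (w.idxOf v) 0 = v := by
        rw [List.getD_eq_getElem _ _ hidx]; exact List.getElem_idxOf hidx
      have hlt : w.getD (w.idxOf v) 0 < w.getD i 0 := by rw [hval]; exact hv.2
      have := hiso (w.idxOf v) i (hlen ▸ hidx) hiu
      have := hiso i (w.idxOf v) hiu (hlen ▸ hidx)
      simp only [Finset.mem_coe, Finset.mem_range]
      have : u.getD (w.idxOf v) 0 < u.getD i 0 := by
        rw [lt_iff_le_not_ge] at hlt ⊢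
        constructor
        · exact (hiso (w.idxOf v) i (hlen ▸ hidx) hiu).mpr hlt.1
        · intro hc
          exact hlt.2 ((hiso i (w.idxOf v) hiu (hlen ▸ hidx)).mp hc)
      exact this
    · intro v hv v' hv' hf
      simp only [Finset.mem_coe, Finset.mem_filter, List.mem_toFinset] at hv hv'
      have hidx : w.idxOf v < w.length := List.idxOf_lt_length_iff.mpr hv.1
      have hidx' : w.idxOf v' < w.length := List.idxOf_lt_length_iff.mpr hv'.1
      have hval : w.getD (w.idxOf v) 0 = v := by
        rw [List.getD_eq_getElem _ _ hidx]; exact List.getElem_idxOf hidx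
      have hval' : w.getD (w.idxOf v') 0 = v' := by
        rw [List.getD_eq_getElem _ _ hidx']; exact List.getElem_idxOf hidx'
      have h1 := (hiso (w.idxOf v) (w.idxOf v') (hlen ▸ hidx) (hlen ▸ hidx')).mp
      have h2 := (hiso (w.idxOf v') (w.idxOf v) (hlen ▸ hidx') (hlen ▸ hidx)).mp
      simp only at hf h1 h2
      rw [← hval, ← hval']
      exact le_antisymm (h1 (le_of_eq hf)) (h2 (le_of_eq hf.symm))
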